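/- In the absolute leader system on a strongly connected weighted directed graph with fixed leader set S0 ≠ ∅, the steady-state opinion of every vertex is submodular in the leader set S1: for all S1 ⊆ T1 ⊆ V ∖ S0, every u ∈ V ∖ (S0 ∪ T1), and every vertex v ∈ V, x̂(T1 ∪ {u})_v − x̂(T1)_v ≤ x̂(S1 ∪ {u})_v − x̂(S1)_v. -/

import Mathlib

open Matrix BigOperators

/-- Discrete maximum principle: if `h` is nonnegative on a nonempty set `S` and
harmonic (in the edge-sum form) outside `S`, then `h` is nonnegative everywhere,
by strong connectivity. -/
lemma stmt9_maxprin (n : ℕ) (hn : 0 < n)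
    (A : Matrix (Fin n) (Fin n) ℝ) (hA : ∀ u v, 0 ≤ A u v)
    (hconn : ∀ u v : Fin n, Relation.ReflTransGen (fun a b => 0 < A a b) u v)
    (S : Finset (Fin n)) (hS : S.Nonempty)
    (h : Fin n → ℝ)
    (hbd : ∀ v ∈ S, 0 ≤ h v)
    (hharm : ∀ v, v ∉ S → ∑ w, A v w * (h v - h w) = 0) :
    ∀ v, 0 ≤ h v := by
  by_contra hcon
  push_neg at hcon
  obtain ⟨z, hz⟩ := hcon
  have : Nonempty (Fin n) := ⟨⟨0, hn⟩⟩
  obtain ⟨v0, -, hmin⟩ := Finset.exists_min_image Finset.univ h ⟨z, Finset.mem_univ z⟩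
  simp only [Finset.mem_univ, forall_true_left] at hmin
  set m := h v0 with hm
  have hmneg : m < 0 := lt_of_le_of_lt (hmin z) hz
  have step : ∀ a b : Fin n, h a = m → 0 < A a b → h b = m := by
    intro a b ha hab
    have haS : a ∉ S := fun hmem => absurd (hbd a hmem) (by rw [ha]; exact not_le.mpr hmneg)
    have hsum := hharm a haS
    have hterm : ∀ w ∈ Finset.univ, A a w * (h a - h w) ≤ 0 := by
      intro w _
      exact mul_nonpos_of_nonneg_of_nonpos (hA a w) (by rw [ha]; linarith [hmin w])
    have hb := (Finset.sum_eq_zero_iff_of_nonpos hterm).mp hsum b (Finset.mem_univ b)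
    rcases mul_eq_zero.mp hb with h1 | h2
    · exact absurd h1 (ne_of_gt hab)
    · rw [ha] at h2; linarith [hmin b]
  have prop : ∀ y : Fin n, Relation.ReflTransGen (fun a b => 0 < A a b) v0 y → h y = m := by
    intro y hreach
    induction hreach with
    | refl => rfl
    | tail _ hab ih => exact step _ _ ih hab
  obtain ⟨s, hs⟩ := hS
  exact absurd (hbd s hs) (not_le.mpr (by rw [prop s (hconn v0 s)]; exact hmneg))

/-- in the absolute leader system on a strongly connected weighted directed
graph with fixed leader set `S0 ≠ ∅`, the steady-state opinion of every vertex is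
submodular in the leader set `S1`: for `S1 ⊆ T1 ⊆ V ∖ S0`, `u ∈ V ∖ (S0 ∪ T1)` and
every vertex `v`, `x̂(T1 ∪ {u})_v − x̂(T1)_v ≤ x̂(S1 ∪ {u})_v − x̂(S1)_v`. -/
theorem stmt9
    (n : ℕ) (hn : 2 ≤ n)
    (A : Matrix (Fin n) (Fin n) ℝ)
    (hA : ∀ u v, 0 ≤ A u v)
    (hconn : ∀ u v : Fin n, Relation.ReflTransGen (fun a b => 0 < A a b) u v)
    (d : Fin n → ℝ) (hd : d = fun u => ∑ v, A u v) (hdpos : ∀ u, 0 < d u)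
    (W : Matrix (Fin n) (Fin n) ℝ)
    (hW : W = Aᵀ * Matrix.diagonal (fun u => (d u)⁻¹))
    (L : Matrix (Fin n) (Fin n) ℝ) (hL : L = Matrix.diagonal d * (1 - Wᵀ))
    (S0 : Finset (Fin n)) (hS0 : S0.Nonempty)
    -- for every admissible leader set `S1`, the follower-follower submatrix of the
    -- Laplacian is invertible:
    (hinv : ∀ S1 : Finset (Fin n), S1 ⊆ S0ᶜ → IsUnit (Matrix.det
      (Matrix.of (fun i j : {v : Fin n // v ∉ S0 ∪ S1} => L i.1 j.1))))
    -- `xhat S1` is the steady-state opinion vector of the absolute leader system with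
    -- leader sets `S0` (opinion 0) and `S1` (opinion 1):
    (xhat : Finset (Fin n) → Fin n → ℝ)
    (hx : ∀ S1 : Finset (Fin n), S1 ⊆ S0ᶜ →
      (∀ v ∈ S0, xhat S1 v = 0) ∧ (∀ v ∈ S1, xhat S1 v = 1) ∧
      (∀ v, v ∉ S0 ∪ S1 → L.mulVec (xhat S1) v = 0)) :
    ∀ S1 T1 : Finset (Fin n), ∀ u : Fin n, S1 ⊆ T1 → T1 ⊆ S0ᶜ →
      u ∉ S0 → u ∉ T1 →
      ∀ v : Fin n,
        xhat (insert u T1) v - xhat T1 v ≤ xhat (insert u S1) v - xhat S1 v := by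
  have hn0 : 0 < n := by omega
  -- L = D - A
  have hL2 : L = Matrix.diagonal d - A := by
    rw [hL, hW, Matrix.transpose_mul, Matrix.transpose_transpose, Matrix.diagonal_transpose,
      mul_sub, mul_one]
    congr 1
    rw [← Matrix.mul_assoc, Matrix.diagonal_mul_diagonal]
    have : (fun u => d u * (d u)⁻¹) = fun _ => (1:ℝ) :=
      funext fun u => mul_inv_cancel₀ (ne_of_gt (hdpos u))
    rw [this, Matrix.diagonal_one, Matrix.one_mul]
  -- edge-sum formula for L.mulVec
  have hform : ∀ (h : Fin n → ℝ) (x : Fin n), L.mulVec h x = ∑ w, A x w * (h x - h w) := by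
    intro h x
    have h1 : L.mulVec h x = d x * h x - ∑ w, A x w * h w := by
      simp only [hL2, Matrix.mulVec, dotProduct, Matrix.sub_apply, Matrix.diagonal_apply,
        sub_mul, ite_mul, zero_mul]
      rw [Finset.sum_sub_distrib, Finset.sum_ite_eq]
      simp
    rw [h1, hd]
    simp only [mul_sub]
    rw [Finset.sum_sub_distrib, Finset.sum_mul]
  -- harmonicity in edge-sum form
  have harm : ∀ (B : Finset (Fin n)), B ⊆ S0ᶜ → ∀ v, v ∉ S0 ∪ B →
      ∑ w, A v w * (xhat B v - xhat B w) = 0 := by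
    intro B hB v hv
    rw [← hform]; exact (hx B hB).2.2 v hv
  obtain ⟨s0, hs0⟩ := hS0
  -- all opinions are at most 1
  have xle1 : ∀ B : Finset (Fin n), B ⊆ S0ᶜ → ∀ v, xhat B v ≤ 1 := by
    intro B hB v
    have := stmt9_maxprin n hn0 A hA hconn (S0 ∪ B) ⟨s0, Finset.mem_union_left _ hs0⟩
      (fun w => 1 - xhat B w)
      (by
        intro w hw
        show 0 ≤ 1 - xhat B w
        rcases Finset.mem_union.mp hw with h' | h'
        · rw [(hx B hB).1 w h']; norm_num
        · rw [(hx B hB).2.1 w h']; norm_num)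
      (by
        intro w hw
        have h0 := harm B hB w hw
        have he : ∑ x, A w x * ((1 - xhat B w) - (1 - xhat B x))
            = - ∑ x, A w x * (xhat B w - xhat B x) := by
          rw [← Finset.sum_neg_distrib]
          apply Finset.sum_congr rfl
          intros; ring
        rw [he, h0, neg_zero]) v
    linarith
  -- monotonicity in the leader set
  have mono : ∀ B C : Finset (Fin n), B ⊆ C → C ⊆ S0ᶜ → ∀ v, xhat B v ≤ xhat C v := by
    intro B C hBC hC v
    have hB : B ⊆ S0ᶜ := hBC.trans hC
    have := stmt9_maxprin n hn0 A hA hconn (S0 ∪ C) ⟨s0, Finset.mem_union_left _ hs0⟩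
      (fun w => xhat C w - xhat B w)
      (by
        intro w hw
        show 0 ≤ xhat C w - xhat B w
        rcases Finset.mem_union.mp hw with h' | h'
        · rw [(hx B hB).1 w h', (hx C hC).1 w h']; norm_num
        · rw [(hx C hC).2.1 w h']
          have := xle1 B hB w
          linarith)
      (by
        intro w hw
        have hwB : w ∉ S0 ∪ B := fun hmem =>
          hw (Finset.union_subset_union_right hBC hmem)
        have e1 := harm B hB w hwB
        have e2 := harm C hC w hw
        have he : ∑ x, A w x * ((xhat C w - xhat B w) - (xhat C x - xhat B x))
            = (∑ x, A w x * (xhat C w - xhat C x)) - ∑ x, A w x * (xhat B w - xhat B x) := by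
          rw [← Finset.sum_sub_distrib]
          apply Finset.sum_congr rfl
          intros; ring
        rw [he, e1, e2, sub_zero]) v
    linarith
  -- main argument
  intro S1 T1 u hST hTc huS0 huT1 v
  have hS1c : S1 ⊆ S0ᶜ := hST.trans hTc
  have huc : u ∈ S0ᶜ := Finset.mem_compl.mpr huS0
  have hiS : insert u S1 ⊆ S0ᶜ := Finset.insert_subset huc hS1c
  have hiT : insert u T1 ⊆ S0ᶜ := Finset.insert_subset huc hTc
  have key := stmt9_maxprin n hn0 A hA hconn (S0 ∪ insert u T1)
    ⟨s0, Finset.mem_union_left _ hs0⟩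
    (fun w => (xhat (insert u S1) w - xhat S1 w) - (xhat (insert u T1) w - xhat T1 w))
    (by
      intro w hw
      show 0 ≤ (xhat (insert u S1) w - xhat S1 w) - (xhat (insert u T1) w - xhat T1 w)
      rcases Finset.mem_union.mp hw with h' | h'
      · rw [(hx S1 hS1c).1 w h', (hx T1 hTc).1 w h',
          (hx (insert u S1) hiS).1 w h', (hx (insert u T1) hiT).1 w h']
        norm_num
      · rcases Finset.mem_insert.mp h' with hwu | hwT
        · rw [hwu, (hx (insert u S1) hiS).2.1 u (Finset.mem_insert_self _ _),
            (hx (insert u T1) hiT).2.1 u (Finset.mem_insert_self _ _)]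
          have := mono S1 T1 hST hTc u
          linarith
        · rw [(hx T1 hTc).2.1 w hwT,
            (hx (insert u T1) hiT).2.1 w (Finset.mem_insert_of_mem hwT)]
          have := mono S1 (insert u S1) (Finset.subset_insert u S1) hiS w
          linarith)
    (by
      intro w hw
      have hw1 : w ∉ S0 ∪ S1 := fun hmem =>
        hw (Finset.union_subset_union_right (hST.trans (Finset.subset_insert u T1)) hmem)
      have hw2 : w ∉ S0 ∪ T1 := fun hmem =>
        hw (Finset.union_subset_union_right (Finset.subset_insert u T1) hmem)
      have hw3 : w ∉ S0 ∪ insert u S1 := fun hmem =>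
        hw (Finset.union_subset_union_right (Finset.insert_subset_insert u hST) hmem)
      have e1 := harm S1 hS1c w hw1
      have e2 := harm T1 hTc w hw2
      have e3 := harm (insert u S1) hiS w hw3
      have e4 := harm (insert u T1) hiT w hw
      have he : ∑ x, A w x *
            (((xhat (insert u S1) w - xhat S1 w) - (xhat (insert u T1) w - xhat T1 w)) -
             ((xhat (insert u S1) x - xhat S1 x) - (xhat (insert u T1) x - xhat T1 x)))
          = (((∑ x, A w x * (xhat (insert u S1) w - xhat (insert u S1) x))
              - ∑ x, A w x * (xhat S1 w - xhat S1 x))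
              - ∑ x, A w x * (xhat (insert u T1) w - xhat (insert u T1) x))
              + ∑ x, A w x * (xhat T1 w - xhat T1 x) := by
        rw [← Finset.sum_sub_distrib, ← Finset.sum_sub_distrib, ← Finset.sum_add_distrib]
        apply Finset.sum_congr rfl
        intros; ring
      rw [he, e1, e2, e3, e4]
      ring) v
  linarith
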